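/- Let S₁ and S₂ be juggling states, each with ball number k. Say that S₂ can follow S₁ if S₂ = {t} ∪ {s−1 : s ∈ S₁} for some integer t ∉ {s−1 : s ∈ S₁}. For a juggling state S with ball number k and j ∈ ℤ, set R_j(S) = k − #{x ∈ S : x > j}, and define r_{ij} = R_{j−i+1}(S_i) for i ∈ {1,2} and j ∈ ℤ. Then S₂ can follow S₁ if and only if both: (a) r_{1j} − r_{2j} ∈ {0,1} for all j ∈ ℤ, and (b) there is no j ∈ ℤ with r_{1j} = r_{2j}, r_{2j} = r_{2(j+1)}, and r_{1(j+1)} = r_{2(j+1)} + 1. -/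

import Mathlib

/-- A (virtual) juggling state: a subset of ℤ whose symmetric difference with
`{i : ℤ | i ≤ 0}` is finite. -/
def IsJugglingState (S : Set ℤ) : Prop := (symmDiff S {i : ℤ | i ≤ 0}).Finite

/-- The ball number of a juggling state: |S ∩ ℤ_{>0}| − |ℤ_{≤0} ∖ S|. -/
noncomputable def ballNumber (S : Set ℤ) : ℤ :=
  ((S ∩ {i : ℤ | 0 < i}).ncard : ℤ) - (({i : ℤ | i ≤ 0} \ S).ncard : ℤ)

/-- R_j(S) = k − #{x ∈ S : x > j}, for a k-ball juggling state S. -/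
noncomputable def Rfun (k : ℤ) (S : Set ℤ) (j : ℤ) : ℤ :=
  k - (({x : ℤ | x ∈ S ∧ j < x}).ncard : ℤ)

lemma finite_tail {S : Set ℤ} (h : IsJugglingState S) (j : ℤ) :
    {x : ℤ | x ∈ S ∧ j < x}.Finite := by
  apply Set.Finite.subset (h.union (Set.finite_Ioc j 0))
  rintro x ⟨hxS, hxj⟩
  by_cases h0 : x ≤ 0
  · exact Or.inr ⟨hxj, h0⟩
  · exact Or.inl (Set.mem_symmDiff.2 (Or.inl ⟨hxS, h0⟩))

open Classical in
lemma Rfun_step {S : Set ℤ} (hfin : ∀ j, {x : ℤ | x ∈ S ∧ j < x}.Finite) (k m : ℤ) :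
    Rfun k S m = Rfun k S (m - 1) + (if m ∈ S then 1 else 0) := by
  have hA : {x : ℤ | x ∈ S ∧ m - 1 < x} =
      {x : ℤ | x ∈ S ∧ m < x} ∪ (if m ∈ S then {m} else ∅) := by
    by_cases hm : m ∈ S
    · ext x
      simp only [Set.mem_setOf_eq, hm, if_true, Set.union_singleton, Set.mem_insert_iff]
      constructor
      · rintro ⟨hs, hx⟩
        rcases eq_or_lt_of_le (by omega : m ≤ x) with h | h
        · exact Or.inl h.symm
        · exact Or.inr ⟨hs, h⟩
      · rintro (rfl | ⟨hs, hx⟩)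
        · exact ⟨hm, by omega⟩
        · exact ⟨hs, by omega⟩
    · ext x
      simp only [Set.mem_setOf_eq, hm, if_false, Set.union_empty]
      constructor
      · rintro ⟨hs, hx⟩
        refine ⟨hs, ?_⟩
        rcases eq_or_lt_of_le (by omega : m ≤ x) with h | h
        · exact absurd (by rwa [← h] at hs) hm
        · exact h
      · rintro ⟨hs, hx⟩; exact ⟨hs, by omega⟩
  have hdisj : Disjoint {x : ℤ | x ∈ S ∧ m < x} (if m ∈ S then {m} else (∅ : Set ℤ)) := by
    by_cases hm : m ∈ S <;> simp [hm, Set.disjoint_singleton_right]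
  have hcard : {x : ℤ | x ∈ S ∧ m - 1 < x}.ncard =
      {x : ℤ | x ∈ S ∧ m < x}.ncard + (if m ∈ S then {m} else (∅:Set ℤ)).ncard := by
    rw [hA]
    exact Set.ncard_union_eq hdisj (hfin m)
      (by by_cases hm : m ∈ S <;> simp [hm])
  simp only [Rfun, hcard]
  by_cases hm : m ∈ S <;> simp [hm] <;> push_cast <;> ring

lemma Rfun_shift (S : Set ℤ) (k m : ℤ) :
    Rfun k ((fun s => s - 1) '' S) m = Rfun k S (m + 1) := by
  have himg : {x : ℤ | x ∈ (fun s => s - 1) '' S ∧ m < x} =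
      (fun s => s - 1) '' {x : ℤ | x ∈ S ∧ m + 1 < x} := by
    ext x
    simp only [Set.mem_setOf_eq, Set.mem_image]
    constructor
    · rintro ⟨⟨s, hs, rfl⟩, hx⟩; exact ⟨s, ⟨hs, by omega⟩, rfl⟩
    · rintro ⟨s, ⟨hs, hsm⟩, rfl⟩; exact ⟨⟨s, hs, rfl⟩, by omega⟩
  have hinj : Function.Injective (fun s : ℤ => s - 1) := by
    intro a b h
    dsimp at h
    omega
  rw [Rfun, Rfun, himg, Set.ncard_image_of_injective _ hinj]

open Classical in
lemma Rfun_insert {T : Set ℤ} {t : ℤ} (hfin : ∀ j, {x : ℤ | x ∈ T ∧ j < x}.Finite)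
    (ht : t ∉ T) (k m : ℤ) :
    Rfun k (insert t T) m = Rfun k T m - (if m < t then 1 else 0) := by
  have hA : {x : ℤ | x ∈ insert t T ∧ m < x} =
      {x : ℤ | x ∈ T ∧ m < x} ∪ (if m < t then {t} else ∅) := by
    by_cases hm : m < t
    · ext x
      simp only [Set.mem_setOf_eq, Set.mem_insert_iff, hm, if_true, Set.union_singleton]
      constructor
      · rintro ⟨rfl | hs, hx⟩
        · exact Or.inl rfl
        · exact Or.inr ⟨hs, hx⟩
      · rintro (rfl | ⟨hs, hx⟩)
        · exact ⟨Or.inl rfl, hm⟩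
        · exact ⟨Or.inr hs, hx⟩
    · ext x
      simp only [Set.mem_setOf_eq, Set.mem_insert_iff, hm, if_false, Set.union_empty]
      constructor
      · rintro ⟨rfl | hs, hx⟩
        · omega
        · exact ⟨hs, hx⟩
      · rintro ⟨hs, hx⟩
        exact ⟨Or.inr hs, hx⟩
  have hdisj : Disjoint {x : ℤ | x ∈ T ∧ m < x} (if m < t then {t} else (∅ : Set ℤ)) := by
    by_cases hm : m < t
    · simp only [hm, if_true, Set.disjoint_singleton_right]
      exact fun h => ht h.1
    · simp [hm]
  have hcard : {x : ℤ | x ∈ insert t T ∧ m < x}.ncard =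
      {x : ℤ | x ∈ T ∧ m < x}.ncard + (if m < t then {t} else (∅:Set ℤ)).ncard := by
    rw [hA]
    exact Set.ncard_union_eq hdisj (hfin m) (by by_cases hm : m < t <;> simp [hm])
  simp only [Rfun, hcard]
  by_cases hm : m < t <;> simp [hm] <;> push_cast <;> ring

lemma Rfun_top {S : Set ℤ} (h : IsJugglingState S) (k : ℤ) :
    ∃ M : ℤ, ∀ m, M ≤ m → Rfun k S m = k := by
  obtain ⟨M, hM⟩ := (finite_tail h 0).bddAbove
  refine ⟨max M 0, fun m hm => ?_⟩
  have : {x : ℤ | x ∈ S ∧ m < x} = ∅ := by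
    ext x
    simp only [Set.mem_setOf_eq, Set.mem_empty_iff_false, iff_false]
    rintro ⟨hs, hx⟩
    have : x ≤ M := hM ⟨hs, by omega⟩
    omega
  simp [Rfun, this]

lemma Rfun_bot {S : Set ℤ} (h : IsJugglingState S) (k : ℤ) :
    ∃ N : ℤ, ∀ m, m ≤ N → Rfun k S m = k - ballNumber S + m := by
  have hP : (S ∩ {i : ℤ | 0 < i}).Finite := by
    apply Set.Finite.subset h
    rintro x ⟨hs, hx⟩
    exact Set.mem_symmDiff.2 (Or.inl ⟨hs, by simpa using hx⟩)
  have hQ : ({i : ℤ | i ≤ 0} \ S).Finite := by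
    apply Set.Finite.subset h
    rintro x ⟨hx, hs⟩
    exact Set.mem_symmDiff.2 (Or.inr ⟨hx, hs⟩)
  obtain ⟨N₀, hN₀⟩ := hQ.bddBelow
  refine ⟨min (N₀ - 1) 0, fun m hm => ?_⟩
  have hm0 : m ≤ 0 := by omega
  have hmQ : ∀ q ∈ ({i : ℤ | i ≤ 0} \ S), m < q := fun q hq => by
    have := hN₀ hq; omega
  have hsplit : {x : ℤ | x ∈ S ∧ m < x} =
      (S ∩ {i : ℤ | 0 < i}) ∪ (Set.Ioc m 0 \ ({i : ℤ | i ≤ 0} \ S)) := by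
    ext x
    simp only [Set.mem_setOf_eq, Set.mem_union, Set.mem_inter_iff, Set.mem_diff, Set.mem_Ioc]
    constructor
    · rintro ⟨hs, hx⟩
      by_cases h0 : 0 < x
      · exact Or.inl ⟨hs, h0⟩
      · exact Or.inr ⟨⟨hx, by omega⟩, fun hq => hq.2 hs⟩
    · rintro (⟨hs, hx⟩ | ⟨⟨hx, h0⟩, hq⟩)
      · exact ⟨hs, by omega⟩
      · refine ⟨?_, hx⟩
        by_contra hns
        exact hq ⟨h0, hns⟩
  have hdisj : Disjoint (S ∩ {i : ℤ | 0 < i}) (Set.Ioc m 0 \ ({i : ℤ | i ≤ 0} \ S)) := by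
    rw [Set.disjoint_left]
    rintro x ⟨_, hx⟩ ⟨⟨_, hx0⟩, _⟩
    simp only [Set.mem_setOf_eq] at hx
    omega
  have hQsub : ({i : ℤ | i ≤ 0} \ S) ⊆ Set.Ioc m 0 := fun q hq =>
    ⟨hmQ q hq, hq.1⟩
  have hIoc : (Set.Ioc m 0).ncard = (-m).toNat := by
    rw [← Finset.coe_Ioc, Set.ncard_coe_finset, Int.card_Ioc]
    congr 1; omega
  have hQle : ({i : ℤ | i ≤ 0} \ S).ncard ≤ (Set.Ioc m 0).ncard :=
    Set.ncard_le_ncard hQsub (Set.finite_Ioc m 0)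
  have hcard : {x : ℤ | x ∈ S ∧ m < x}.ncard =
      (S ∩ {i : ℤ | 0 < i}).ncard + ((Set.Ioc m 0).ncard - ({i : ℤ | i ≤ 0} \ S).ncard) := by
    rw [hsplit, Set.ncard_union_eq hdisj hP ((Set.finite_Ioc m 0).diff),
      Set.ncard_diff hQsub (hQ)]
  simp only [Rfun, hcard, ballNumber]
  have h1 : (((Set.Ioc m 0).ncard - ({i : ℤ | i ≤ 0} \ S).ncard : ℕ) : ℤ)
      = ((Set.Ioc m 0).ncard : ℤ) - (({i : ℤ | i ≤ 0} \ S).ncard : ℤ) := by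
    omega
  have h2 : ((Set.Ioc m 0).ncard : ℤ) = -m := by
    rw [hIoc]; omega
  push_cast [h1, h2]
  ring

theorem stmt_3 (k : ℤ) (S₁ S₂ : Set ℤ)
    (h₁ : IsJugglingState S₁) (h₂ : IsJugglingState S₂)
    (hb₁ : ballNumber S₁ = k) (hb₂ : ballNumber S₂ = k) :
    -- S₂ can follow S₁ : S₂ = {t} ∪ {s − 1 : s ∈ S₁} for some t ∉ {s − 1 : s ∈ S₁}
    (∃ t : ℤ, t ∉ (fun s => s - 1) '' S₁ ∧ S₂ = insert t ((fun s => s - 1) '' S₁)) ↔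
      -- (a): r_{1j} − r_{2j} ∈ {0,1} for all j, where r_{ij} = R_{j−i+1}(S_i)
      ((∀ j : ℤ, Rfun k S₁ j - Rfun k S₂ (j - 1) = 0 ∨
          Rfun k S₁ j - Rfun k S₂ (j - 1) = 1) ∧
        -- (b): no j with r_{1j} = r_{2j} = r_{2(j+1)} = r_{1(j+1)} − 1
        ¬ ∃ j : ℤ, Rfun k S₁ j = Rfun k S₂ (j - 1) ∧
          Rfun k S₂ (j - 1) = Rfun k S₂ j ∧
          Rfun k S₁ (j + 1) = Rfun k S₂ j + 1) := by
  classical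
  set T : Set ℤ := (fun s => s - 1) '' S₁ with hTdef
  -- finiteness of tails of T
  have hfinT : ∀ j, {x : ℤ | x ∈ T ∧ j < x}.Finite := by
    intro j
    apply Set.Finite.subset ((finite_tail h₁ j).image (fun s => s - 1))
    rintro x ⟨⟨s, hs, rfl⟩, hx⟩
    have hx' : j < s - 1 := hx
    exact ⟨s, ⟨hs, by omega⟩, rfl⟩
  have hfin₂ := finite_tail h₂
  -- S₁ in terms of T
  have e₁ : ∀ j : ℤ, Rfun k S₁ j = Rfun k T (j - 1) := by
    intro j
    have h := Rfun_shift S₁ k (j - 1)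
    rw [show j - 1 + 1 = j by ring] at h
    exact h.symm
  constructor
  · rintro ⟨t, htT, hS₂⟩
    have hins : ∀ m, Rfun k S₂ m = Rfun k T m - (if m < t then 1 else 0) := by
      intro m; rw [hS₂]; exact Rfun_insert hfinT htT k m
    constructor
    · intro j
      rw [e₁ j, hins (j - 1)]
      by_cases h : j - 1 < t
      · rw [if_pos h]; omega
      · rw [if_neg h]; omega
    · rintro ⟨j, c1, c2, c3⟩
      rw [e₁ j, hins (j - 1)] at c1
      rw [e₁ (j + 1), show j + 1 - 1 = j by ring, hins j] at c3
      have ha1 : t ≤ j - 1 := by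
        by_contra hc
        rw [if_pos (by omega)] at c1
        omega
      rw [if_neg (show ¬ j < t by omega)] at c3
      omega
  · rintro ⟨ha, hb⟩
    -- reformulated hypotheses
    have ha' : ∀ m : ℤ, Rfun k T m - Rfun k S₂ m = 0 ∨ Rfun k T m - Rfun k S₂ m = 1 := by
      intro m
      have h := ha (m + 1)
      rw [e₁ (m + 1), show m + 1 - 1 = m by ring] at h
      exact h
    have hb' : ∀ m : ℤ, Rfun k T m = Rfun k S₂ m → Rfun k S₂ m = Rfun k S₂ (m + 1) →
        Rfun k T (m + 1) ≠ Rfun k S₂ (m + 1) + 1 := by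
      intro m h1 h2 h3
      apply hb
      refine ⟨m + 1, ?_, ?_, ?_⟩
      · rw [e₁ (m + 1), show m + 1 - 1 = m by ring]; exact h1
      · rw [show m + 1 - 1 = m by ring]; exact h2
      · rw [e₁ (m + 1 + 1), show m + 1 + 1 - 1 = m + 1 by ring]; omega
    -- step lemmas
    have stepT : ∀ m : ℤ, Rfun k T m = Rfun k T (m - 1) + (if m ∈ T then 1 else 0) :=
      Rfun_step hfinT k
    have step2 : ∀ m : ℤ, Rfun k S₂ m = Rfun k S₂ (m - 1) + (if m ∈ S₂ then 1 else 0) :=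
      Rfun_step hfin₂ k
    -- asymptotics
    obtain ⟨M₁, hM₁⟩ := Rfun_top h₁ k
    obtain ⟨M₂, hM₂⟩ := Rfun_top h₂ k
    obtain ⟨N₁, hN₁⟩ := Rfun_bot h₁ k
    obtain ⟨N₂, hN₂⟩ := Rfun_bot h₂ k
    have gtop : ∀ m : ℤ, M₁ - 1 ≤ m → Rfun k T m = k := by
      intro m hm
      rw [Rfun_shift S₁ k m]
      exact hM₁ _ (by omega)
    have gbot : ∀ m : ℤ, m ≤ N₁ - 1 → Rfun k T m = m + 1 := by
      intro m hm
      rw [Rfun_shift S₁ k m, hN₁ _ (by omega), hb₁]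
      ring
    have hbot2 : ∀ m : ℤ, m ≤ N₂ → Rfun k S₂ m = m := by
      intro m hm
      rw [hN₂ _ hm, hb₂]; ring
    -- the least point where the two functions agree
    have hex : ∃ z : ℤ, Rfun k T z = Rfun k S₂ z := by
      refine ⟨max (M₁ - 1) M₂, ?_⟩
      rw [gtop _ (le_max_left _ _), hM₂ _ (le_max_right _ _)]
    have hbdd : ∃ b : ℤ, ∀ z : ℤ, Rfun k T z = Rfun k S₂ z → b ≤ z := by
      refine ⟨min (N₁ - 1) N₂ + 1, fun z hz => ?_⟩
      by_contra hcon
      rw [gbot z (by omega), hbot2 z (by omega)] at hz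
      omega
    obtain ⟨t, hPt, hmin⟩ := Int.exists_least_of_bdd hbdd hex
    -- above t the functions agree
    have hge : ∀ m : ℤ, t ≤ m → Rfun k T m = Rfun k S₂ m := by
      refine Int.le_induction hPt (fun n hn ih => ?_)
      rcases ha' (n + 1) with h0 | h1
      · omega
      · exfalso
        have hsT := stepT (n + 1)
        have hs2 := step2 (n + 1)
        rw [show n + 1 - 1 = n by ring] at hsT hs2
        have hT : (n + 1) ∈ T := by
          by_contra hT
          rw [if_neg hT] at hsT
          by_cases h2' : (n + 1) ∈ S₂
          · rw [if_pos h2'] at hs2; omega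
          · rw [if_neg h2'] at hs2; omega
        have h2 : (n + 1) ∉ S₂ := by
          intro h2'
          rw [if_pos hT] at hsT
          rw [if_pos h2'] at hs2
          omega
        rw [if_pos hT] at hsT
        rw [if_neg h2] at hs2
        exact hb' n ih (by omega) (by omega)
    -- below t the difference is 1
    have hlt : ∀ m : ℤ, m < t → Rfun k T m = Rfun k S₂ m + 1 := by
      intro m hm
      rcases ha' m with h0 | h1
      · exact absurd (hmin m (by omega)) (by omega)
      · omega
    -- membership characterization
    have hx : ∀ x : ℤ, (if x ∈ T then (1:ℤ) else 0) - (if x ∈ S₂ then (1:ℤ) else 0) =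
        (if x = t then (-1:ℤ) else 0) := by
      intro x
      have hsT := stepT x
      have hs2 := step2 x
      rcases lt_trichotomy x t with h | h | h
      · have d1 := hlt x h
        have d2 := hlt (x - 1) (by omega)
        rw [if_neg (show ¬ x = t by omega)]
        omega
      · subst h
        have d1 := hPt
        have d2 := hlt (x - 1) (by omega)
        rw [if_pos rfl]
        omega
      · have d1 := hge x (by omega)
        have d2 := hge (x - 1) (by omega)
        rw [if_neg (show ¬ x = t by omega)]
        omega
    have htT : t ∉ T := by
      intro hT
      have h := hx t
      rw [if_pos rfl, if_pos hT] at h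
      by_cases h2 : t ∈ S₂
      · rw [if_pos h2] at h; omega
      · rw [if_neg h2] at h; omega
    have ht2 : t ∈ S₂ := by
      by_contra h2
      have h := hx t
      rw [if_pos rfl, if_neg htT, if_neg h2] at h
      omega
    refine ⟨t, htT, ?_⟩
    ext x
    simp only [Set.mem_insert_iff]
    by_cases hxt : x = t
    · subst hxt
      simp [ht2]
    · have h := hx x
      rw [if_neg hxt] at h
      have hmem : x ∈ S₂ ↔ x ∈ T := by
        constructor
        · intro h2
          by_contra hT
          rw [if_neg hT, if_pos h2] at h
          omega
        · intro hT
          by_contra h2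
          rw [if_pos hT, if_neg h2] at h
          omega
      rw [hmem]
      simp [hxt]
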